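/- Let A ∈ ℝ^{n×n} with A + Aᵀ positive definite, U ∈ ℝ^{n×k} with k < n, γ > 0, α > 0, and b ∈ ℝⁿ. For any initial x⁽⁰⁾, the alternating iteration (A + αI)x^{(m+1/2)} = (αI − γUUᵀ)x^{(m)} + b, (αI + γUUᵀ)x^{(m+1)} = (αI − A)x^{(m+1/2)} + b converges to the unique solution of (A + γUUᵀ)x = b. -/

import Mathlib

open Matrix Filter

noncomputable def toE {n : ℕ} : (Fin n → ℝ) ≃L[ℝ] EuclideanSpace ℝ (Fin n) :=
  (EuclideanSpace.equiv (Fin n) ℝ).symm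

lemma toE_inner {n : ℕ} (a b : Fin n → ℝ) : (inner ℝ (toE a) (toE b) : ℝ) = a ⬝ᵥ b := by
  simp [toE, dotProduct, PiLp.inner_apply, EuclideanSpace.equiv, mul_comm]

lemma key_identity {n : ℕ} (B : Matrix (Fin n) (Fin n) ℝ) (α : ℝ) (w : Fin n → ℝ) :
    ‖toE ((α • (1:Matrix (Fin n) (Fin n) ℝ) - B) *ᵥ w)‖^2
      = ‖toE ((α • (1:Matrix (Fin n) (Fin n) ℝ) + B) *ᵥ w)‖^2 - 4*α*(w ⬝ᵥ (B *ᵥ w)) := by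
  have h1 : (α • (1:Matrix (Fin n) (Fin n) ℝ) - B) *ᵥ w = α • w - B *ᵥ w := by
    rw [Matrix.sub_mulVec, Matrix.smul_mulVec, Matrix.one_mulVec]
  have h2 : (α • (1:Matrix (Fin n) (Fin n) ℝ) + B) *ᵥ w = α • w + B *ᵥ w := by
    rw [Matrix.add_mulVec, Matrix.smul_mulVec, Matrix.one_mulVec]
  rw [h1, h2, map_sub, map_add, norm_sub_sq_real, norm_add_sq_real]
  have : (inner ℝ (toE (α • w)) (toE (B *ᵥ w)) : ℝ) = α * (w ⬝ᵥ (B *ᵥ w)) := by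
    rw [toE_inner]; simp [smul_dotProduct, smul_eq_mul]
  ring_nf
  rw [real_inner_comm] at this ⊢
  rw [this]; ring

lemma dot_self_nonneg {n : ℕ} (v : Fin n → ℝ) : 0 ≤ v ⬝ᵥ v :=
  Finset.sum_nonneg fun i _ => mul_self_nonneg _

lemma isUnit_of_posdot {n : ℕ} (M : Matrix (Fin n) (Fin n) ℝ)
    (h : ∀ v, v ≠ 0 → 0 < v ⬝ᵥ (M *ᵥ v)) : IsUnit M := by
  rw [← Matrix.mulVec_injective_iff_isUnit]
  intro u v huv
  by_contra hne
  have h0 : u - v ≠ 0 := sub_ne_zero.2 hne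
  have := h _ h0
  rw [Matrix.mulVec_sub, huv, sub_self, dotProduct_zero] at this
  exact lt_irrefl 0 this

set_option maxHeartbeats 1000000 in
theorem stmt_6 {n k : ℕ} (hkn : k < n) (A : Matrix (Fin n) (Fin n) ℝ)
    (U : Matrix (Fin n) (Fin k) ℝ) (hA : (A + Aᵀ).PosDef)
    (α γ : ℝ) (hα : 0 < α) (hγ : 0 < γ) (b : Fin n → ℝ)
    (x xhalf : ℕ → Fin n → ℝ)
    (hstep1 : ∀ m, (A + α • 1) *ᵥ xhalf m = (α • 1 - γ • (U * Uᵀ)) *ᵥ x m + b)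
    (hstep2 : ∀ m, (α • 1 + γ • (U * Uᵀ)) *ᵥ x (m + 1) = (α • 1 - A) *ᵥ xhalf m + b) :
    ∃ xs : Fin n → ℝ, ((A + γ • (U * Uᵀ)) *ᵥ xs = b ∧
        ∀ y : Fin n → ℝ, (A + γ • (U * Uᵀ)) *ᵥ y = b → y = xs) ∧
      Tendsto x atTop (nhds xs) := by
  set S : Matrix (Fin n) (Fin n) ℝ := γ • (U * Uᵀ) with hS
  set M₁ : Matrix (Fin n) (Fin n) ℝ := A + α • 1 with hM₁
  set N₁ : Matrix (Fin n) (Fin n) ℝ := α • 1 - S with hN₁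
  set M₂ : Matrix (Fin n) (Fin n) ℝ := α • 1 + S with hM₂
  set N₂ : Matrix (Fin n) (Fin n) ℝ := α • 1 - A with hN₂
  -- positivity of the quadratic form of A
  have hdotA : ∀ w : Fin n → ℝ, w ≠ 0 → 0 < w ⬝ᵥ (A *ᵥ w) := by
    intro w hw
    have h2 := hA.dotProduct_mulVec_pos hw
    have hstar : star w = w := by simp
    rw [hstar, Matrix.add_mulVec, dotProduct_add] at h2
    have ht : w ⬝ᵥ (Aᵀ *ᵥ w) = w ⬝ᵥ (A *ᵥ w) := by
      rw [Matrix.dotProduct_mulVec, Matrix.vecMul_transpose, dotProduct_comm]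
    rw [ht] at h2
    simpa using by linarith [h2]
  -- nonnegativity of the quadratic form of S
  have hdotS : ∀ w : Fin n → ℝ, 0 ≤ w ⬝ᵥ (S *ᵥ w) := by
    intro w
    have : w ⬝ᵥ (S *ᵥ w) = γ * ((Uᵀ *ᵥ w) ⬝ᵥ (Uᵀ *ᵥ w)) := by
      rw [hS, Matrix.smul_mulVec, dotProduct_smul, ← Matrix.mulVec_mulVec,
        Matrix.dotProduct_mulVec]
      have h2 : w ᵥ* U = Uᵀ *ᵥ w := by
        conv_lhs => rw [← Matrix.transpose_transpose U]
        exact Matrix.vecMul_transpose _ _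
      rw [h2]; rfl
    rw [this]
    exact mul_nonneg hγ.le (dot_self_nonneg _)
  have hdotself : ∀ w : Fin n → ℝ, w ≠ 0 → 0 < w ⬝ᵥ w := by
    intro w hw
    rcases lt_or_eq_of_le (dot_self_nonneg w) with h | h
    · exact h
    · exact absurd ((dotProduct_self_eq_zero).1 h.symm) hw
  have hdot1 : ∀ w : Fin n → ℝ, w ⬝ᵥ ((α • (1:Matrix (Fin n) (Fin n) ℝ)) *ᵥ w) = α * (w ⬝ᵥ w) := by
    intro w
    rw [Matrix.smul_mulVec, Matrix.one_mulVec, dotProduct_smul]; rfl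
  -- invertibility
  have hM₁u : IsUnit M₁ := by
    refine isUnit_of_posdot _ fun v hv => ?_
    rw [hM₁, Matrix.add_mulVec, dotProduct_add, hdot1]
    have := hdotA v hv; have := hdotself v hv
    nlinarith
  have hM₂u : IsUnit M₂ := by
    refine isUnit_of_posdot _ fun v hv => ?_
    rw [hM₂, Matrix.add_mulVec, dotProduct_add, hdot1]
    have := hdotS v; have := hdotself v hv
    nlinarith
  have hASu : IsUnit (A + S) := by
    refine isUnit_of_posdot _ fun v hv => ?_
    rw [Matrix.add_mulVec, dotProduct_add]
    have := hdotA v hv; have := hdotS v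
    linarith
  have hM₁d : IsUnit M₁.det := (Matrix.isUnit_iff_isUnit_det _).1 hM₁u
  have hM₂d : IsUnit M₂.det := (Matrix.isUnit_iff_isUnit_det _).1 hM₂u
  have hASd : IsUnit (A + S).det := (Matrix.isUnit_iff_isUnit_det _).1 hASu
  have hM₁inv : ∀ v : Fin n → ℝ, M₁⁻¹ *ᵥ (M₁ *ᵥ v) = v := fun v => by
    rw [Matrix.mulVec_mulVec, Matrix.nonsing_inv_mul _ hM₁d, Matrix.one_mulVec]
  have hM₁inv' : ∀ v : Fin n → ℝ, M₁ *ᵥ (M₁⁻¹ *ᵥ v) = v := fun v => by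
    rw [Matrix.mulVec_mulVec, Matrix.mul_nonsing_inv _ hM₁d, Matrix.one_mulVec]
  have hM₂inv : ∀ v : Fin n → ℝ, M₂⁻¹ *ᵥ (M₂ *ᵥ v) = v := fun v => by
    rw [Matrix.mulVec_mulVec, Matrix.nonsing_inv_mul _ hM₂d, Matrix.one_mulVec]
  have hM₂inv' : ∀ v : Fin n → ℝ, M₂ *ᵥ (M₂⁻¹ *ᵥ v) = v := fun v => by
    rw [Matrix.mulVec_mulVec, Matrix.mul_nonsing_inv _ hM₂d, Matrix.one_mulVec]
  -- the solution
  set xs : Fin n → ℝ := (A + S)⁻¹ *ᵥ b with hxs_def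
  have hxs : (A + S) *ᵥ xs = b := by
    rw [hxs_def, Matrix.mulVec_mulVec, Matrix.mul_nonsing_inv _ hASd, Matrix.one_mulVec]
  have huniq : ∀ y : Fin n → ℝ, (A + S) *ᵥ y = b → y = xs := by
    intro y hy
    have : (A + S)⁻¹ *ᵥ ((A + S) *ᵥ y) = (A + S)⁻¹ *ᵥ b := by rw [hy]
    rwa [Matrix.mulVec_mulVec, Matrix.nonsing_inv_mul _ hASd, Matrix.one_mulVec] at this
  refine ⟨xs, ⟨hxs, huniq⟩, ?_⟩
  -- fixed point identities
  have h1s : N₁ *ᵥ xs + b = M₁ *ᵥ xs := by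
    conv_lhs => rw [← hxs]
    rw [← Matrix.add_mulVec]
    congr 1
    rw [hN₁, hM₁]; abel
  have h2s : N₂ *ᵥ xs + b = M₂ *ᵥ xs := by
    conv_lhs => rw [← hxs]
    rw [← Matrix.add_mulVec]
    congr 1
    rw [hN₂, hM₂]; abel
  -- error recurrence
  have hhalf : ∀ m, xhalf m = M₁⁻¹ *ᵥ (N₁ *ᵥ x m + b) := by
    intro m
    rw [← hstep1 m, hM₁inv]
  have hrec : ∀ m, M₂ *ᵥ (x (m+1) - xs)
      = N₂ *ᵥ (M₁⁻¹ *ᵥ (N₁ *ᵥ (x m - xs))) := by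
    intro m
    have e1 : xhalf m - xs = M₁⁻¹ *ᵥ (N₁ *ᵥ (x m - xs)) := by
      rw [hhalf m, Matrix.mulVec_sub]
      nth_rewrite 1 [show xs = M₁⁻¹ *ᵥ (M₁ *ᵥ xs) from (hM₁inv xs).symm]
      rw [← h1s, ← Matrix.mulVec_sub]
      congr 1; abel
    rw [Matrix.mulVec_sub, hstep2 m, ← h2s, ← e1, Matrix.mulVec_sub]
    abel
  -- estimate for the U-part: non-expansive
  have hQ : ∀ z : Fin n → ℝ, ‖toE (N₁ *ᵥ (M₂⁻¹ *ᵥ z))‖ ≤ ‖toE z‖ := by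
    intro z
    set w := M₂⁻¹ *ᵥ z with hw
    have hz : M₂ *ᵥ w = z := hM₂inv' z
    have hkey := key_identity S α w
    rw [← hN₁, ← hM₂, hz] at hkey
    have hnn := hdotS w
    have hsq : ‖toE (N₁ *ᵥ w)‖^2 ≤ ‖toE z‖^2 := by nlinarith
    have := Real.sqrt_le_sqrt hsq
    rwa [Real.sqrt_sq (norm_nonneg _), Real.sqrt_sq (norm_nonneg _)] at this
  -- the contraction factor from the A-part
  set E := EuclideanSpace ℝ (Fin n)
  set L : E →ₗ[ℝ] E :=
    (toE.toLinearMap.comp ((N₂ * M₁⁻¹).mulVecLin)).comp toE.symm.toLinearMap with hL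
  have hLapply : ∀ v : E, L v = toE ((N₂ * M₁⁻¹) *ᵥ (toE.symm v)) := fun v => rfl
  have hLcont : Continuous L := L.continuous_of_finiteDimensional
  have hnpos : 0 < n := lt_of_le_of_lt (Nat.zero_le k) hkn
  haveI : Nonempty (Fin n) := ⟨⟨0, hnpos⟩⟩
  haveI : Nontrivial E := by
    refine ⟨toE 0, toE (fun _ => 1), fun h => ?_⟩
    have := congrArg (fun v => toE.symm v ⟨0, hnpos⟩) h
    simpa using this
  obtain ⟨v₁, hv₁⟩ := exists_norm_eq E (zero_le_one (α := ℝ))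
  obtain ⟨v₀, hv₀mem, hmax⟩ := (isCompact_sphere (0:E) 1).exists_isMaxOn
    ⟨v₁, by simpa [mem_sphere_iff_norm] using hv₁⟩
    ((continuous_norm.comp hLcont).continuousOn)
  set c : ℝ := ‖L v₀‖ with hc
  have hc0 : 0 ≤ c := norm_nonneg _
  have hv₀norm : ‖v₀‖ = 1 := by simpa [mem_sphere_iff_norm] using hv₀mem
  have hc1 : c < 1 := by
    have hv₀ne : toE.symm v₀ ≠ 0 := by
      intro h
      have : v₀ = 0 := by
        have := congrArg toE h
        simpa using this
      rw [this] at hv₀norm; simp at hv₀norm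
    set u := M₁⁻¹ *ᵥ (toE.symm v₀) with hu
    have hune : u ≠ 0 := by
      intro h
      apply hv₀ne
      rw [← hM₁inv' (toE.symm v₀), ← hu, h, Matrix.mulVec_zero]
    have hkey := key_identity A α u
    have hMu : (α • (1:Matrix (Fin n) (Fin n) ℝ) + A) = M₁ := by rw [hM₁]; abel
    rw [← hN₂, hMu, hM₁inv' (toE.symm v₀)] at hkey
    have hAu := hdotA u hune
    have hLv : L v₀ = toE (N₂ *ᵥ u) := by
      rw [hLapply, ← Matrix.mulVec_mulVec, hu]
    have hnv : ‖toE (toE.symm v₀)‖ = 1 := by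
      rw [toE.apply_symm_apply]; exact hv₀norm
    have hsq : c^2 < 1 := by
      rw [hc, hLv, hkey, hnv]
      have h4 := mul_pos hα hAu
      nlinarith [sq_nonneg (1:ℝ)]
    exact (pow_lt_one_iff_of_nonneg hc0 two_ne_zero).1 hsq
  -- scaling: the max on the sphere bounds everywhere
  have hP : ∀ z : Fin n → ℝ, ‖toE (N₂ *ᵥ (M₁⁻¹ *ᵥ z))‖ ≤ c * ‖toE z‖ := by
    intro z
    rcases eq_or_ne z 0 with rfl | hz
    · simp [Matrix.mulVec_zero]
    have ht : (0:ℝ) < ‖toE z‖ := by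
      rw [norm_pos_iff]
      simpa using hz
    set t : ℝ := ‖toE z‖ with htdef
    have hsph : (t⁻¹ • toE z) ∈ Metric.sphere (0:E) 1 := by
      rw [mem_sphere_iff_norm, sub_zero, norm_smul, norm_inv, Real.norm_eq_abs,
        abs_of_pos ht, inv_mul_cancel₀ ht.ne']
    have hle := hmax hsph
    have hLsmul : L (t⁻¹ • toE z) = t⁻¹ • L (toE z) := map_smul _ _ _
    have : ‖L (t⁻¹ • toE z)‖ = t⁻¹ * ‖L (toE z)‖ := by
      rw [hLsmul, norm_smul, norm_inv, Real.norm_eq_abs, abs_of_pos ht]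
    have h2 : t⁻¹ * ‖L (toE z)‖ ≤ c := by
      rw [← this]; exact hle
    have h3 : ‖L (toE z)‖ ≤ c * t := by
      rw [← mul_le_mul_iff_right₀ (inv_pos.2 ht)]
      calc t⁻¹ * ‖L (toE z)‖ ≤ c := h2
        _ = t⁻¹ * (c * t) := by field_simp
    have hLz : L (toE z) = toE (N₂ *ᵥ (M₁⁻¹ *ᵥ z)) := by
      rw [hLapply, toE.symm_apply_apply, ← Matrix.mulVec_mulVec]
    rwa [hLz] at h3
  -- geometric decay
  have hstep : ∀ m, ‖toE (M₂ *ᵥ (x (m+1) - xs))‖ ≤ c * ‖toE (M₂ *ᵥ (x m - xs))‖ := by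
    intro m
    have hy1 : M₂ *ᵥ (x (m+1) - xs) = N₂ *ᵥ (M₁⁻¹ *ᵥ (N₁ *ᵥ (M₂⁻¹ *ᵥ (M₂ *ᵥ (x m - xs))))) := by
      rw [hM₂inv]; exact hrec m
    calc ‖toE (M₂ *ᵥ (x (m+1) - xs))‖
        = ‖toE (N₂ *ᵥ (M₁⁻¹ *ᵥ (N₁ *ᵥ (M₂⁻¹ *ᵥ (M₂ *ᵥ (x m - xs))))))‖ := by rw [hy1]
      _ ≤ c * ‖toE (N₁ *ᵥ (M₂⁻¹ *ᵥ (M₂ *ᵥ (x m - xs))))‖ := hP _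
      _ ≤ c * ‖toE (M₂ *ᵥ (x m - xs))‖ := mul_le_mul_of_nonneg_left (hQ _) hc0
  have hgeo : ∀ m, ‖toE (M₂ *ᵥ (x m - xs))‖ ≤ c^m * ‖toE (M₂ *ᵥ (x 0 - xs))‖ := by
    intro m
    induction m with
    | zero => simp
    | succ m ih =>
      calc ‖toE (M₂ *ᵥ (x (m+1) - xs))‖ ≤ c * ‖toE (M₂ *ᵥ (x m - xs))‖ := hstep m
        _ ≤ c * (c^m * ‖toE (M₂ *ᵥ (x 0 - xs))‖) := mul_le_mul_of_nonneg_left ih hc0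
        _ = c^(m+1) * ‖toE (M₂ *ᵥ (x 0 - xs))‖ := by ring
  have htend0 : Tendsto (fun m => ‖toE (M₂ *ᵥ (x m - xs))‖) atTop (nhds 0) := by
    apply squeeze_zero (fun m => norm_nonneg _) hgeo
    have := (tendsto_pow_atTop_nhds_zero_of_lt_one hc0 hc1).mul_const ‖toE (M₂ *ᵥ (x 0 - xs))‖
    simpa using this
  have htendE : Tendsto (fun m => toE (M₂ *ᵥ (x m - xs))) atTop (nhds (0:E)) :=
    tendsto_zero_iff_norm_tendsto_zero.2 htend0
  -- transfer back
  have hxm : ∀ m, x m = M₂⁻¹ *ᵥ (toE.symm (toE (M₂ *ᵥ (x m - xs)))) + xs := by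
    intro m
    rw [toE.symm_apply_apply, hM₂inv]
    abel
  set F : E → Fin n → ℝ := fun v => M₂⁻¹ *ᵥ (toE.symm v) + xs with hF
  have hFcont : Continuous F := by
    apply Continuous.add _ continuous_const
    exact ((M₂⁻¹).mulVecLin.comp toE.symm.toLinearMap).continuous_of_finiteDimensional
  have hF0 : F 0 = xs := by
    rw [hF]; simp [Matrix.mulVec_zero]
  have : Tendsto (fun m => F (toE (M₂ *ᵥ (x m - xs)))) atTop (nhds (F 0)) :=
    (hFcont.tendsto 0).comp htendE
  rw [hF0] at this
  have hfun : (fun m => F (toE (M₂ *ᵥ (x m - xs)))) = x := by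
    funext m
    show M₂⁻¹ *ᵥ toE.symm (toE (M₂ *ᵥ (x m - xs))) + xs = x m
    rw [toE.symm_apply_apply, hM₂inv]
    abel
  rwa [hfun] at this
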